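/- arXiv:1601.07747 — 13 statements merged into one kernel-verified Lean document; each statement's English description precedes it below -/
import Mathlib

section
/- Let v₁=(1,0,1), v₂=(0,1,1), v₃=(-1,0,1), v₄=(0,-1,1) in ℤ³ (type 4a). For each of the integer vectors u = (0,1,0,0), u = (1,0,0,0), and u = (1,1,0,0), there exists y ∈ ℝ³ such that uᵢ − 1 < ⟨y, vᵢ⟩ ≤ uᵢ for all i = 1,…,4. (For instance y = (1/4, 1/2, −1/4), y = (1/2, 1/4, −1/4), and y = (1/2, 1/2, 0) respectively work.) Hence the divisorial ideals T(0,1,0,0), T(1,0,0,0), T(1,1,0,0) over the toric singularity of type 4a are conic. -/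
/-- The pairing ⟨y, v⟩ = ∑ⱼ yⱼ vⱼ of a real vector y ∈ ℝ³ with an integer vector v ∈ ℤ³. -/
noncomputable def pair3 (y : Fin 3 → ℝ) (v : Fin 3 → ℤ) : ℝ :=
  ∑ j, y j * (v j : ℝ)

/-- `u ∈ ℤⁿ` is conic with respect to `v₁,…,vₙ ∈ ℤ³` if there is `y ∈ ℝ³` with
`uᵢ − 1 < ⟨y, vᵢ⟩ ≤ uᵢ` for all `i`.  By Bruns' criterion this holds iff the
divisorial ideal `T(u)` over the associated toric singularity is conic. -/
def IsConic {n : ℕ} (v : Fin n → Fin 3 → ℤ) (u : Fin n → ℤ) : Prop :=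
  ∃ y : Fin 3 → ℝ, ∀ i, (u i : ℝ) - 1 < pair3 y (v i) ∧ pair3 y (v i) ≤ (u i : ℝ)

/-- The ray generators of type 4a: v₁=(1,0,1), v₂=(0,1,1), v₃=(-1,0,1), v₄=(0,-1,1). -/
def type4a : Fin 4 → Fin 3 → ℤ :=
  ![![1, 0, 1], ![0, 1, 1], ![-1, 0, 1], ![0, -1, 1]]

/-- The divisorial ideals T(0,1,0,0), T(1,0,0,0), T(1,1,0,0) of type 4a are conic. -/
theorem type4a_conics :
    IsConic type4a ![0, 1, 0, 0] ∧ IsConic type4a ![1, 0, 0, 0] ∧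
      IsConic type4a ![1, 1, 0, 0] := by
  refine ⟨⟨![1/4, 1/2, -1/4], ?_⟩, ⟨![1/2, 1/4, -1/4], ?_⟩, ⟨![1/2, 1/2, 0], ?_⟩⟩ <;>
    intro i <;> fin_cases i <;>
    simp [pair3, type4a, Fin.sum_univ_three] <;> norm_num
end

section
/- Let v₁=(1,0,1), v₂=(0,1,1), v₃=(-1,0,1), v₄=(0,-1,1) in ℤ³ (type 4a). There is no y = (α,β,γ) ∈ ℝ³ such that ⟨y, vᵢ⟩ − uᵢ ∈ (−1, 0] for all i = 1,…,4, where u = (3,1,0,0). Equivalently, the divisorial ideal T(3,1,0,0) over the toric singularity of type 4a is not conic. (Indeed, writing εᵢ = ⟨y,vᵢ⟩ − uᵢ one would have ε₁ + ε₃ + 2 = ε₂ + ε₄, with the left side positive and the right side ≤ 0.) -/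
theorem type4a_not_conic :
    ¬ IsConic type4a ![3, 1, 0, 0] := by
  rintro ⟨y, h⟩
  have h0 := h 0
  have h1 := h 1
  have h2 := h 2
  have h3 := h 3
  simp only [pair3, type4a, Fin.sum_univ_three] at h0 h1 h2 h3
  norm_num [Matrix.cons_val_zero, Matrix.cons_val_one, Matrix.head_cons, Matrix.cons_val_two, Matrix.cons_val_three,
    Matrix.vecHead, Matrix.vecTail] at h0 h1 h2 h3
  linarith [h0.1, h0.2, h1.1, h1.2, h2.1, h2.2, h3.1, h3.2]
end

section
/- Let v₁=(0,1,1), v₂=(-1,0,1), v₃=(0,-1,1), v₄=(1,-1,1) in ℤ³ (type 4b). For each of the integer vectors u = (1,0,0,0), u = (2,0,0,0), and u = (3,0,0,0), there exists y ∈ ℝ³ such that uᵢ − 1 < ⟨y, vᵢ⟩ ≤ uᵢ for all i = 1,…,4. (For instance y = (1/2, 1/2, 0), y = (1/2, 5/4, 1/2), and y = (3/4, 3/2, 5/8) respectively work.) Hence the divisorial ideals T(1,0,0,0), T(2,0,0,0), T(3,0,0,0) over the toric singularity of type 4b are conic. -/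
/-- The ray generators of type 4b: v1=(0,1,1), v2=(-1,0,1), v3=(0,-1,1), v4=(1,-1,1). -/
def type4b : Fin 4 → Fin 3 → ℤ :=
  ![![0, 1, 1], ![-1, 0, 1], ![0, -1, 1], ![1, -1, 1]]

theorem type4b_conics :
    IsConic type4b ![1, 0, 0, 0] ∧
      IsConic type4b ![2, 0, 0, 0] ∧
      IsConic type4b ![3, 0, 0, 0] := by
  refine ⟨⟨![1/2, 1/2, 0], ?_⟩, ⟨![1/2, 5/4, 1/2], ?_⟩, ⟨![3/4, 3/2, 5/8], ?_⟩⟩ <;>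
    intro i <;> fin_cases i <;>
    simp [pair3, type4b, Fin.sum_univ_three] <;> norm_num
end

section
/- Let v₁=(1,0,1), v₂=(0,1,1), v₃=(-1,1,1), v₄=(-1,0,1), v₅=(0,-1,1) in ℤ³ (type 5a). For each of the integer vectors u = (0,1,0,0,0), (1,0,0,0,0), (1,1,0,0,0), (2,1,0,0,0), (2,2,0,0,0), (3,2,0,0,0), there exists y ∈ ℝ³ such that uᵢ − 1 < ⟨y, vᵢ⟩ ≤ uᵢ for all i = 1,…,5. (Witnesses: y = (1/8,3/8,−1/4), (1/2,1/4,−1/4), (1/2,1/2,0), (9/8,1/2,1/4), (5/4,3/4,1/2), (3/2,3/4,5/8) respectively.) Hence these six divisorial ideals over the toric singularity of type 5a are conic. -/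
/-- The ray generators of type 5a: v1=(1,0,1), v2=(0,1,1), v3=(-1,1,1), v4=(-1,0,1), v5=(0,-1,1). -/
def type5a : Fin 5 → Fin 3 → ℤ :=
  ![![1, 0, 1], ![0, 1, 1], ![-1, 1, 1], ![-1, 0, 1], ![0, -1, 1]]

theorem type5a_conics :
    IsConic type5a ![0, 1, 0, 0, 0] ∧
      IsConic type5a ![1, 0, 0, 0, 0] ∧
      IsConic type5a ![1, 1, 0, 0, 0] ∧
      IsConic type5a ![2, 1, 0, 0, 0] ∧
      IsConic type5a ![2, 2, 0, 0, 0] ∧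
      IsConic type5a ![3, 2, 0, 0, 0] := by
  refine ⟨⟨![1/8, 3/8, -1/4], ?_⟩, ⟨![1/2, 1/4, -1/4], ?_⟩, ⟨![1/2, 1/2, 0], ?_⟩,
    ⟨![9/8, 1/2, 1/4], ?_⟩, ⟨![5/4, 3/4, 1/2], ?_⟩, ⟨![3/2, 3/4, 5/8], ?_⟩⟩ <;>
  · intro i
    fin_cases i <;>
    · norm_num [pair3, type5a, Fin.sum_univ_three, Matrix.cons_val_two]
end

section
/- Let v₁=(1,0,1), v₂=(0,1,1), v₃=(-1,1,1), v₄=(-1,0,1), v₅=(0,-1,1) in ℤ³ (type 5a). There is no y ∈ ℝ³ such that ⟨y, vᵢ⟩ − uᵢ ∈ (−1, 0] for all i = 1,…,5, where u = (3,1,0,0,0). Equivalently, the divisorial ideal T(3,1,0,0,0) over the toric singularity of type 5a is not conic. -/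
theorem type5a_not_conic :
    ¬ IsConic type5a ![3, 1, 0, 0, 0] := by
  rintro ⟨y, h⟩
  have h1 := h 0
  have h2 := h 1
  have h4 := h 3
  have h5 := h 4
  simp [pair3, type5a, Fin.sum_univ_three] at h1 h2 h4 h5
  linarith [h1.1, h2.2, h4.1, h5.2]
end

section
/- Let v₁=(1,0,1), v₂=(0,1,1), v₃=(-1,1,1), v₄=(-1,0,1), v₅=(0,-1,1), v₆=(1,-1,1) in ℤ³ (type 6a). For each of the integer vectors u = (1,0,0,0,0,0), (0,1,0,0,0,0), (0,0,1,0,0,0), (1,1,0,0,0,0), (0,1,1,0,0,0), (1,1,1,0,0,0), (1,2,1,0,0,0), (1,2,2,0,0,0), (2,2,1,0,0,0), (2,3,2,0,0,0), (2,2,2,0,0,0), there exists y ∈ ℝ³ such that uᵢ − 1 < ⟨y, vᵢ⟩ ≤ uᵢ for all i = 1,…,6. (Witnesses: y = (1/2,1/4,−3/8), (1/4,1/2,−3/8), (−1/4,1/4,−3/8), (1/2,1/2,−1/4), (0,1/2,−1/4), (3/8,11/16,−1/4), (1/2,1,1/4), (1/2,5/4,3/8), (3/4,5/4,3/8), (3/4,3/2,5/8),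 (5/8,11/8,1/2) respectively.) Hence these eleven divisorial ideals over the toric singularity of type 6a are conic. -/
/-- The ray generators of type 6a: v1=(1,0,1), v2=(0,1,1), v3=(-1,1,1), v4=(-1,0,1), v5=(0,-1,1), v6=(1,-1,1). -/
def type6a : Fin 6 → Fin 3 → ℤ :=
  ![![1, 0, 1], ![0, 1, 1], ![-1, 1, 1], ![-1, 0, 1], ![0, -1, 1], ![1, -1, 1]]

theorem type6a_conics :
    IsConic type6a ![1, 0, 0, 0, 0, 0] ∧
      IsConic type6a ![0, 1, 0, 0, 0, 0] ∧
      IsConic type6a ![0, 0, 1, 0, 0, 0] ∧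
      IsConic type6a ![1, 1, 0, 0, 0, 0] ∧
      IsConic type6a ![0, 1, 1, 0, 0, 0] ∧
      IsConic type6a ![1, 1, 1, 0, 0, 0] ∧
      IsConic type6a ![1, 2, 1, 0, 0, 0] ∧
      IsConic type6a ![1, 2, 2, 0, 0, 0] ∧
      IsConic type6a ![2, 2, 1, 0, 0, 0] ∧
      IsConic type6a ![2, 3, 2, 0, 0, 0] ∧
      IsConic type6a ![2, 2, 2, 0, 0, 0] := by
  refine ⟨?_, ?_, ?_, ?_, ?_, ?_, ?_, ?_, ?_, ?_, ?_⟩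
  · exact ⟨(![1/2, 1/4, -3/8] : Fin 3 → ℝ), by intro i; fin_cases i <;> norm_num [pair3, type6a, Fin.sum_univ_three, Matrix.cons_val_two, Matrix.tail_cons, Matrix.head_cons]⟩
  · exact ⟨(![1/4, 1/2, -3/8] : Fin 3 → ℝ), by intro i; fin_cases i <;> norm_num [pair3, type6a, Fin.sum_univ_three, Matrix.cons_val_two, Matrix.tail_cons, Matrix.head_cons]⟩
  · exact ⟨(![-1/4, 1/4, -3/8] : Fin 3 → ℝ), by intro i; fin_cases i <;> norm_num [pair3, type6a, Fin.sum_univ_three, Matrix.cons_val_two, Matrix.tail_cons, Matrix.head_cons]⟩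
  · exact ⟨(![1/2, 1/2, -1/4] : Fin 3 → ℝ), by intro i; fin_cases i <;> norm_num [pair3, type6a, Fin.sum_univ_three, Matrix.cons_val_two, Matrix.tail_cons, Matrix.head_cons]⟩
  · exact ⟨(![0, 1/2, -1/4] : Fin 3 → ℝ), by intro i; fin_cases i <;> norm_num [pair3, type6a, Fin.sum_univ_three, Matrix.cons_val_two, Matrix.tail_cons, Matrix.head_cons]⟩
  · exact ⟨(![3/8, 11/16, -1/4] : Fin 3 → ℝ), by intro i; fin_cases i <;> norm_num [pair3, type6a, Fin.sum_univ_three, Matrix.cons_val_two, Matrix.tail_cons, Matrix.head_cons]⟩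
  · exact ⟨(![1/2, 1, 1/4] : Fin 3 → ℝ), by intro i; fin_cases i <;> norm_num [pair3, type6a, Fin.sum_univ_three, Matrix.cons_val_two, Matrix.tail_cons, Matrix.head_cons]⟩
  · exact ⟨(![1/2, 5/4, 3/8] : Fin 3 → ℝ), by intro i; fin_cases i <;> norm_num [pair3, type6a, Fin.sum_univ_three, Matrix.cons_val_two, Matrix.tail_cons, Matrix.head_cons]⟩
  · exact ⟨(![3/4, 5/4, 3/8] : Fin 3 → ℝ), by intro i; fin_cases i <;> norm_num [pair3, type6a, Fin.sum_univ_three, Matrix.cons_val_two, Matrix.tail_cons, Matrix.head_cons]⟩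
  · exact ⟨(![3/4, 3/2, 5/8] : Fin 3 → ℝ), by intro i; fin_cases i <;> norm_num [pair3, type6a, Fin.sum_univ_three, Matrix.cons_val_two, Matrix.tail_cons, Matrix.head_cons]⟩
  · exact ⟨(![5/8, 11/8, 1/2] : Fin 3 → ℝ), by intro i; fin_cases i <;> norm_num [pair3, type6a, Fin.sum_univ_three, Matrix.cons_val_two, Matrix.tail_cons, Matrix.head_cons]⟩
end

section
/- Let v₁=(1,0,1), v₂=(0,1,1), v₃=(-1,1,1), v₄=(-1,0,1), v₅=(0,-1,1), v₆=(1,-1,1) in ℤ³ (type 6a). For each of the integer vectors u = (2,3,1,0,0,0), u = (1,0,−1,0,0,0), and u = (1,3,1,0,0,0), there is no y ∈ ℝ³ such that ⟨y, vᵢ⟩ − uᵢ ∈ (−1, 0] for all i = 1,…,6. Equivalently, the divisorial ideals T(2,3,1,0,0,0), T(1,0,−1,0,0,0), T(1,3,1,0,0,0) over the toric singularity of type 6a are not conic. -/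
lemma vec6_five {α : Type*} (a b c d e f : α) : (![a, b, c, d, e, f] : Fin 6 → α) 5 = f := rfl

theorem type6a_not_conics :
    ¬ IsConic type6a ![2, 3, 1, 0, 0, 0] ∧
      ¬ IsConic type6a ![1, 0, -1, 0, 0, 0] ∧
      ¬ IsConic type6a ![1, 3, 1, 0, 0, 0] := by
  refine ⟨?_, ?_, ?_⟩ <;>
  · rintro ⟨y, h⟩
    have h1 := h 0
    have h2 := h 1
    have h3 := h 2
    have h4 := h 3
    have h5 := h 4
    have h6 := h 5
    rw [show type6a 5 = ![1, -1, 1] from rfl, vec6_five] at h6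
    simp only [type6a, Matrix.cons_val] at h4 h5
    norm_num [pair3, type6a, Fin.sum_univ_three, Matrix.cons_val_succ, vec6_five,
      Matrix.cons_val_zero, Matrix.cons_val_one, Matrix.head_cons, Matrix.cons_val, Matrix.cons_val_two, Matrix.tail_cons,
      show (5:Fin 6) = ⟨5, by norm_num⟩ from rfl] at h1 h2 h3 h4 h5 h6
    obtain ⟨h1a, h1b⟩ := h1
    obtain ⟨h2a, h2b⟩ := h2
    obtain ⟨h3a, h3b⟩ := h3
    obtain ⟨h4a, h4b⟩ := h4
    obtain ⟨h5a, h5b⟩ := h5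
    obtain ⟨h6a, h6b⟩ := h6
    linarith
end

section
/- Let v₁=(1,0,1), v₂=(0,1,1), v₃=(-1,1,1), v₄=(-1,-1,1), v₅=(0,-1,1) in ℤ³ (type 6b). There is no y ∈ ℝ³ such that ⟨y, vᵢ⟩ − uᵢ ∈ (−1, 0] for all i = 1,…,5, where u = (0,0,0,4,2). Equivalently, the divisorial ideal T(0,0,0,4,2) over the toric singularity of type 6b is not conic. -/
/-- The ray generators of type 6b: v1=(1,0,1), v2=(0,1,1), v3=(-1,1,1), v4=(-1,-1,1), v5=(0,-1,1). -/
def type6b : Fin 5 → Fin 3 → ℤ :=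
  ![![1, 0, 1], ![0, 1, 1], ![-1, 1, 1], ![-1, -1, 1], ![0, -1, 1]]

theorem type6b_not_conic :
    ¬ IsConic type6b ![0, 0, 0, 4, 2] := by
  rintro ⟨y, h⟩
  have h1 := h 1
  have h2 := h 2
  have h3 := h 3
  have h4 := h 4
  simp [pair3, type6b, Fin.sum_univ_three] at h1 h2 h3 h4
  linarith [h1.1, h2.2, h3.1, h4.2]
end

section
/- Let v₁=(1,0,1), v₂=(0,1,1), v₃=(-2,-1,1), v₄=(0,-1,1) in ℤ³ (type 6c). For each of the integer vectors u = (0,0,0,1), (0,0,1,0), (0,0,1,1), (0,0,2,0), (0,0,2,1), there exists y ∈ ℝ³ such that uᵢ − 1 < ⟨y, vᵢ⟩ ≤ uᵢ for all i = 1,…,4. (Witnesses: y = (1/8,−3/8,−1/4), (−1/4,−1/4,−1/2), (−1/4,−1/2,−1/4), (−5/8,−1/8,−1/4), (−1/2,−1/2,−1/8) respectively.) Hence these five divisorial ideals over the toric singularity of type 6c are conic. -/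
/-- The ray generators of type 6c: v1=(1,0,1), v2=(0,1,1), v3=(-2,-1,1), v4=(0,-1,1). -/
def type6c : Fin 4 → Fin 3 → ℤ :=
  ![![1, 0, 1], ![0, 1, 1], ![-2, -1, 1], ![0, -1, 1]]

theorem type6c_conics :
    IsConic type6c ![0, 0, 0, 1] ∧
      IsConic type6c ![0, 0, 1, 0] ∧
      IsConic type6c ![0, 0, 1, 1] ∧
      IsConic type6c ![0, 0, 2, 0] ∧
      IsConic type6c ![0, 0, 2, 1] := by
  refine ⟨⟨![1/8, -3/8, -1/4], ?_⟩, ⟨![-1/4, -1/4, -1/2], ?_⟩,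
    ⟨![-1/4, -1/2, -1/4], ?_⟩, ⟨![-5/8, -1/8, -1/4], ?_⟩,
    ⟨![-1/2, -1/2, -1/8], ?_⟩⟩ <;>
  intro i <;> fin_cases i <;>
  simp [pair3, type6c, Fin.sum_univ_three] <;> norm_num
end

section
/- Let v₁=(1,0,1), v₂=(0,1,1), v₃=(-1,1,1), v₄=(-1,-1,1), v₅=(1,-1,1) in ℤ³ (type 7a). For each of the integer vectors u = (0,0,0,0,1), (0,0,0,1,0), (0,0,0,1,1), (0,0,0,2,0), (0,0,0,2,1), (0,0,0,2,2), (0,0,0,3,1), (0,0,0,3,2), (0,0,0,4,2), there exists y ∈ ℝ³ such that uᵢ − 1 < ⟨y, vᵢ⟩ ≤ uᵢ for all i = 1,…,5. (Witnesses: y = (1/8,−1/8,−1/8), (−1/2,−1/2,−3/8), (−1/4,−3/4,−1/8), (−3/4,−3/4,−1/8), (−3/8,−7/8,1/4), (−1/4,−9/8,1/4), (−3/4,−5/4,3/8), (−5/8,−11/8,1/2), (−7/8,−25/16,5/8) respectively.) Hence these nine divisorial ideals over the toric singularity of type 7a are conic. -/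
/-- The ray generators of type 7a: v1=(1,0,1), v2=(0,1,1), v3=(-1,1,1), v4=(-1,-1,1), v5=(1,-1,1). -/
def type7a : Fin 5 → Fin 3 → ℤ :=
  ![![1, 0, 1], ![0, 1, 1], ![-1, 1, 1], ![-1, -1, 1], ![1, -1, 1]]

theorem type7a_conics :
    IsConic type7a ![0, 0, 0, 0, 1] ∧
      IsConic type7a ![0, 0, 0, 1, 0] ∧
      IsConic type7a ![0, 0, 0, 1, 1] ∧
      IsConic type7a ![0, 0, 0, 2, 0] ∧
      IsConic type7a ![0, 0, 0, 2, 1] ∧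
      IsConic type7a ![0, 0, 0, 2, 2] ∧
      IsConic type7a ![0, 0, 0, 3, 1] ∧
      IsConic type7a ![0, 0, 0, 3, 2] ∧
      IsConic type7a ![0, 0, 0, 4, 2] := by
  refine ⟨?_, ?_, ?_, ?_, ?_, ?_, ?_, ?_, ?_⟩
  · exact ⟨![1/8, -1/8, -1/8], by
      intro i; fin_cases i <;>
        simp [pair3, type7a, Fin.sum_univ_three] <;> norm_num⟩
  · exact ⟨![-1/2, -1/2, -3/8], by
      intro i; fin_cases i <;>
        simp [pair3, type7a, Fin.sum_univ_three] <;> norm_num⟩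
  · exact ⟨![-1/4, -3/4, -1/8], by
      intro i; fin_cases i <;>
        simp [pair3, type7a, Fin.sum_univ_three] <;> norm_num⟩
  · exact ⟨![-3/4, -3/4, -1/8], by
      intro i; fin_cases i <;>
        simp [pair3, type7a, Fin.sum_univ_three] <;> norm_num⟩
  · exact ⟨![-3/8, -7/8, 1/4], by
      intro i; fin_cases i <;>
        simp [pair3, type7a, Fin.sum_univ_three] <;> norm_num⟩
  · exact ⟨![-1/4, -9/8, 1/4], by
      intro i; fin_cases i <;>
        simp [pair3, type7a, Fin.sum_univ_three] <;> norm_num⟩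
  · exact ⟨![-3/4, -5/4, 3/8], by
      intro i; fin_cases i <;>
        simp [pair3, type7a, Fin.sum_univ_three] <;> norm_num⟩
  · exact ⟨![-5/8, -11/8, 1/2], by
      intro i; fin_cases i <;>
        simp [pair3, type7a, Fin.sum_univ_three] <;> norm_num⟩
  · exact ⟨![-7/8, -25/16, 5/8], by
      intro i; fin_cases i <;>
        simp [pair3, type7a, Fin.sum_univ_three] <;> norm_num⟩
end

section
/- Let v₁=(1,0,1), v₂=(0,1,1), v₃=(-1,1,1), v₄=(-1,-1,1), v₅=(1,-1,1) in ℤ³ (type 7a). For each of the integer vectors u = (0,0,0,1,−1) and u = (0,0,0,4,1), there is no y ∈ ℝ³ such that ⟨y, vᵢ⟩ − uᵢ ∈ (−1, 0] for all i = 1,…,5. Equivalently, the divisorial ideals T(0,0,0,1,−1) and T(0,0,0,4,1) over the toric singularity of type 7a are not conic. -/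
theorem type7a_not_conics :
    ¬ IsConic type7a ![0, 0, 0, 1, -1] ∧
      ¬ IsConic type7a ![0, 0, 0, 4, 1] := by
  constructor
  · rintro ⟨y, h⟩
    have h1 := h 0
    have h2 := h 1
    have h3 := h 2
    have h4 := h 3
    have h5 := h 4
    simp [pair3, type7a, Fin.sum_univ_three] at h1 h2 h3 h4 h5
    obtain ⟨h1a, h1b⟩ := h1
    obtain ⟨h2a, h2b⟩ := h2
    obtain ⟨h3a, h3b⟩ := h3
    obtain ⟨h4a, h4b⟩ := h4
    obtain ⟨h5a, h5b⟩ := h5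
    linarith
  · rintro ⟨y, h⟩
    have h1 := h 0
    have h2 := h 1
    have h3 := h 2
    have h4 := h 3
    have h5 := h 4
    simp [pair3, type7a, Fin.sum_univ_three] at h1 h2 h3 h4 h5
    obtain ⟨h1a, h1b⟩ := h1
    obtain ⟨h2a, h2b⟩ := h2
    obtain ⟨h3a, h3b⟩ := h3
    obtain ⟨h4a, h4b⟩ := h4
    obtain ⟨h5a, h5b⟩ := h5
    linarith
end

section
/- Let v₁=(1,0,1), v₂=(0,1,1), v₃=(-2,-1,1), v₄=(1,-1,1) in ℤ³ (type 7b). For each of the integer vectors u = (0,0,c,0) with c = 1,2,3,4,5,6, there exists y ∈ ℝ³ such that uᵢ − 1 < ⟨y, vᵢ⟩ ≤ uᵢ for all i = 1,…,4. (Witnesses: y = (−1/4,−1/4,−1/2), (−1/2,−1/2,−3/8), (−7/8,−1/2,1/4), (−5/4,−1/2,3/8), (−13/8,−7/8,3/4), (−29/16,−7/8,7/8) respectively.) Hence the divisorial ideals T(0,0,c,0) for c = 1,…,6 over the toric singularity of type 7b are conic. -/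
/-- The ray generators of type 7b: v1=(1,0,1), v2=(0,1,1), v3=(-2,-1,1), v4=(1,-1,1). -/
def type7b : Fin 4 → Fin 3 → ℤ :=
  ![![1, 0, 1], ![0, 1, 1], ![-2, -1, 1], ![1, -1, 1]]

theorem type7b_conics :
    IsConic type7b ![0, 0, 1, 0] ∧
      IsConic type7b ![0, 0, 2, 0] ∧
      IsConic type7b ![0, 0, 3, 0] ∧
      IsConic type7b ![0, 0, 4, 0] ∧
      IsConic type7b ![0, 0, 5, 0] ∧
      IsConic type7b ![0, 0, 6, 0] := by
  refine ⟨⟨![-1/4,-1/4,-1/2], ?_⟩, ⟨![-1/2,-1/2,-3/8], ?_⟩, ⟨![-7/8,-1/2,1/4], ?_⟩,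
    ⟨![-5/4,-1/2,3/8], ?_⟩, ⟨![-13/8,-7/8,3/4], ?_⟩, ⟨![-29/16,-7/8,7/8], ?_⟩⟩ <;>
  · intro i
    fin_cases i <;> simp [pair3, type7b, Fin.sum_univ_three] <;> norm_num
end

section
/- Let v₁=(0,1,1), v₂=(-1,1,1), v₃=(-1,-1,1), v₄=(2,-1,1) in ℤ³ (type 8b). For each of the integer vectors u = (0,0,1,0), (0,0,1,1), (0,0,2,0), (0,0,2,1), (0,0,3,0), (0,0,3,1), (0,0,4,1), there exists y ∈ ℝ³ such that uᵢ − 1 < ⟨y, vᵢ⟩ ≤ uᵢ for all i = 1,…,4. (Witnesses: y = (−1/2,−1/2,−1/4), (0,−1/2,−1/8), (−5/8,−5/8,−1/8), (−1/4,−3/4,1/4), (−7/8,−9/8,1/4), (−5/8,−5/4,3/8), (−3/4,−13/8,3/4) respectively.) Moreover, for u = (0,0,4,0) no such y ∈ ℝ³ exists. Hence over the toric singularity of type 8b the divisorial ideals T(0,0,1,0), T(0,0,1,1), T(0,0,2,0), T(0,0,2,1), T(0,0,3,0), T(0,0,3,1), T(0,0,4,1) are conic, while T(0,0,4,0) is not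 conic. -/
/-- The ray generators of type 8b: v1=(0,1,1), v2=(-1,1,1), v3=(-1,-1,1), v4=(2,-1,1). -/
def type8b : Fin 4 → Fin 3 → ℤ :=
  ![![0, 1, 1], ![-1, 1, 1], ![-1, -1, 1], ![2, -1, 1]]

theorem type8b_conic_classification :
    IsConic type8b ![0, 0, 1, 0] ∧
      IsConic type8b ![0, 0, 1, 1] ∧
      IsConic type8b ![0, 0, 2, 0] ∧
      IsConic type8b ![0, 0, 2, 1] ∧
      IsConic type8b ![0, 0, 3, 0] ∧
      IsConic type8b ![0, 0, 3, 1] ∧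
      IsConic type8b ![0, 0, 4, 1] ∧
      ¬ IsConic type8b ![0, 0, 4, 0] := by

  refine ⟨⟨![(-1/2 : ℝ), -1/2, -1/4], ?_⟩, ⟨![(0 : ℝ), -1/2, -1/8], ?_⟩, ⟨![(-5/8 : ℝ), -5/8, -1/8], ?_⟩, ⟨![(-1/4 : ℝ), -3/4, 1/4], ?_⟩, ⟨![(-7/8 : ℝ), -9/8, 1/4], ?_⟩,
    ⟨![(-5/8 : ℝ), -5/4, 3/8], ?_⟩, ⟨![(-3/4 : ℝ), -13/8, 3/4], ?_⟩, ?_⟩ <;>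
    first
    | (intro i; fin_cases i <;>
        simp only [pair3, type8b, Fin.sum_univ_three, Matrix.cons_val_zero,
          Matrix.cons_val_one, Matrix.head_cons, Matrix.cons_val_two, Matrix.tail_cons,
          Matrix.cons_val_three] <;> simp <;> norm_num)
    | skip

  rintro ⟨y, hy⟩
  have h1 := hy 0
  have h2 := hy 1
  have h3 := hy 2
  have h4 := hy 3
  simp only [pair3, type8b, Fin.sum_univ_three, Matrix.cons_val_zero, Matrix.cons_val_one,
    Matrix.head_cons, Matrix.cons_val_two, Matrix.tail_cons, Matrix.cons_val_three] at h1 h2 h3 h4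
  push_cast at h1 h2 h3 h4
  obtain ⟨h1l, h1u⟩ := h1
  obtain ⟨h2l, h2u⟩ := h2
  obtain ⟨h3l, h3u⟩ := h3
  obtain ⟨h4l, h4u⟩ := h4
  linarith
end
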